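/- arXiv:1904.10304 — 3 statements merged into one kernel-verified Lean document; each statement's English description precedes it below -/
import Mathlib

section
/- Let c₁ = (√5 − 1)/2, c₂ = (−2 + √5 + i√(5 − 2√5))/2, c₃ = (−2 + √5 − i√(5 − 2√5))/2 in ℂ. Then c₂ + c₂c₃/(1 − c₁) = c₁ + c₁c₂ + c₁c₂²/(1 − c₁), i.e. the tip points satisfy φ(231̄) = φ(1221̄). -/
open Real Complex

/-- for the golden ternary tree parameters, `φ(231̄) = φ(1221̄)`. -/
theorem golden_tip_identification :
    let c₁ : ℂ := (Real.sqrt 5 - 1) / 2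
    let c₂ : ℂ := (-2 + Real.sqrt 5 + Complex.I * Real.sqrt (5 - 2 * Real.sqrt 5)) / 2
    let c₃ : ℂ := (-2 + Real.sqrt 5 - Complex.I * Real.sqrt (5 - 2 * Real.sqrt 5)) / 2
    c₂ + c₂ * c₃ / (1 - c₁) = c₁ + c₁ * c₂ + c₁ * c₂ ^ 2 / (1 - c₁) := by
  intro c₁ c₂ c₃
  have h5 : (0:ℝ) ≤ 5 := by norm_num
  have hs : ((Real.sqrt 5 : ℝ) : ℂ)^2 = 5 := by
    norm_cast; rw [Real.sq_sqrt h5]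
  have ht : ((Real.sqrt (5 - 2 * Real.sqrt 5) : ℝ) : ℂ)^2 = 5 - 2 * (Real.sqrt 5 : ℝ) := by
    norm_cast
    rw [Real.sq_sqrt]
    nlinarith [Real.sq_sqrt h5, Real.sqrt_nonneg 5, Real.sqrt_lt_sqrt h5 (by norm_num : (5:ℝ) < 9)]
  have h2 : ((3:ℂ) - (Real.sqrt 5 : ℝ)) ≠ 0 := by
    intro h
    have h' : ((Real.sqrt 5 : ℝ) : ℂ) = 3 := by linear_combination -h
    have h3 : Real.sqrt 5 = 3 := by exact_mod_cast h'
    nlinarith [Real.sq_sqrt h5]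
  have h1 : (1:ℂ) - c₁ = (3 - (Real.sqrt 5 : ℝ)) / 2 := by simp only [c₁]; ring
  simp only [c₁, c₂, c₃, h1]
  field_simp
  set s : ℂ := ((Real.sqrt 5 : ℝ) : ℂ)
  set u : ℂ := ((Real.sqrt (5 - 2 * Real.sqrt 5) : ℝ) : ℂ)
  linear_combination (-1 - Complex.I * u) * hs +
    (s + 1) * ht +
    (-(s + 1) * u ^ 2) * Complex.I_sq
end

section
/- Let z ∈ ℂ with z ≠ 0, z ≠ 1, and let c₂, c₃ ∈ ℂ with c₂ ≠ c₃ satisfy both equations c₂ + c₂c₃/(1 − z) = z + zc₂ + zc₂²/(1 − z) and c₃ + c₃c₂/(1 − z) = z + zc₃ + zc₃²/(1 − z). Then c₂ + c₃ = (1 − z)²/z and, if additionally z ≠ −1, c₂ c₃ = z(1 − z)/(1 + z). -/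
/-- conversely, the tip-to-tip identification system forces the elementary
symmetric functions of `c₂, c₃`. -/
theorem system_gives_symm_functions (z c₂ c₃ : ℂ) (hz0 : z ≠ 0) (hz1 : z ≠ 1)
    (hne : c₂ ≠ c₃)
    (h2 : c₂ + c₂ * c₃ / (1 - z) = z + z * c₂ + z * c₂ ^ 2 / (1 - z))
    (h3 : c₃ + c₃ * c₂ / (1 - z) = z + z * c₃ + z * c₃ ^ 2 / (1 - z)) :
    c₂ + c₃ = (1 - z) ^ 2 / z ∧ (z ≠ -1 → c₂ * c₃ = z * (1 - z) / (1 + z)) := by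
  have hz1' : (1 : ℂ) - z ≠ 0 := sub_ne_zero.mpr hz1.symm
  have hd : c₂ - c₃ ≠ 0 := sub_ne_zero.mpr hne
  have h2' : c₂ * (1 - z) + c₂ * c₃ = z * (1 - z) + z * c₂ * (1 - z) + z * c₂ ^ 2 := by
    field_simp at h2; linear_combination h2
  have h3' : c₃ * (1 - z) + c₃ * c₂ = z * (1 - z) + z * c₃ * (1 - z) + z * c₃ ^ 2 := by
    field_simp at h3; linear_combination h3
  have hs : z * (c₂ + c₃) = (1 - z) ^ 2 := by
    have : (c₂ - c₃) * (z * (c₂ + c₃) - (1 - z) ^ 2) = 0 := by linear_combination h3' - h2'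
    rcases mul_eq_zero.mp this with h | h
    · exact absurd h hd
    · linear_combination h
  have hp : (1 + z) * (c₂ * c₃) = z * (1 - z) := by
    have key : z * ((1 + z) * (c₂ * c₃)) = z * (z * (1 - z)) := by
      linear_combination z * (h2' + h3') / 2 + (z * (c₂ + c₃) / 2) * hs
    exact mul_left_cancel₀ hz0 key
  constructor
  · field_simp
    linear_combination hs
  · intro hzm1
    have hz1m : (1 : ℂ) + z ≠ 0 := by
      intro h; apply hzm1; linear_combination h
    field_simp
    linear_combination hp
end

section
/- Let z = 1/2, c₂ = 1/4 + i√15/12, c₃ = 1/4 − i√15/12. Then 1 + c₂ + c₂c₃(1 + z + zc₃/(1 − z)) = 1 + z + zc₂ + zc₂² + zc₂³/(1 − z), i.e. the extra tip-to-tip equivalence φ(23131̄) = φ(12221̄) holds, witnessing that T_A(1/2) is an unstable tree. -/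
/-- the extra tip-to-tip equivalence `φ(23131̄) = φ(12221̄)` for `T_A(1/2)`. -/
theorem half_tree_extra_identification :
    let z : ℂ := 1 / 2
    let c₂ : ℂ := 1 / 4 + Complex.I * Real.sqrt 15 / 12
    let c₃ : ℂ := 1 / 4 - Complex.I * Real.sqrt 15 / 12
    1 + c₂ + c₂ * c₃ * (1 + z + z * c₃ / (1 - z))
      = 1 + z + z * c₂ + z * c₂ ^ 2 + z * c₂ ^ 3 / (1 - z) := by
  intro z c₂ c₃
  have h : ((Real.sqrt 15 : ℝ) : ℂ) ^ 2 = 15 := by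
    norm_cast
    exact Real.sq_sqrt (by norm_num)
  simp only [z, c₂, c₃]
  field_simp
  linear_combination (-Complex.I ^ 2 * 4608) * h
    + ((-15 : ℂ) * 4608) * Complex.I_sq
end
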